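/- Let n, k ∈ ℕ with 3 ≤ k ≤ n−1, and let 𝒯 = (T,w) be a weighted tree with leaf set [n] that has an edge ē dividing [n] into two sets each of cardinality strictly less than k. Then for every z ∈ ℝ there exists a weight function w′ on the same tree T such that D_I((T,w′)) = D_I(𝒯) for every k-subset I of [n] and D_tot((T,w′)) = D_tot(𝒯) − ((n−k)/k)·z. (Namely, w′ adds z to the weight of ē and subtracts z/k from the weight of every twig.) -/

import Mathlib

/-- A weighted finite tree with leaf set labelled by `Fin n`:
a finite vertex type `V`, a tree `G` on `V`, an injective labelling `leaf` of the
degree-one vertices by `Fin n` (every vertex of degree one is a labelled leaf),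
and a weight function `w` on edges (zero off the edge set). -/
structure WTree (n : ℕ) where
  V : Type
  fintypeV : Fintype V
  G : SimpleGraph V
  isTree : G.IsTree
  leaf : Fin n → V
  leafInj : Function.Injective leaf
  leafSpec : ∀ v : V, (G.neighborSet v).ncard = 1 ↔ v ∈ Set.range leaf
  w : Sym2 V → ℝ
  wSupport : ∀ e, e ∉ G.edgeSet → w e = 0

namespace WTree

variable {n : ℕ}

/-- The degree of a vertex. -/
noncomputable def deg (T : WTree n) (v : T.V) : ℕ := (T.G.neighborSet v).ncard

/-- A node is a vertex of degree `> 2`. -/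
def IsNode (T : WTree n) (v : T.V) : Prop := 2 < T.deg v

/-- A tree is essential if it has no vertices of degree `2`. -/
def Essential (T : WTree n) : Prop := ∀ v : T.V, T.deg v ≠ 2

/-- The set of edges lying on the path between two vertices. -/
def pathEdges (T : WTree n) (u v : T.V) : Set (Sym2 T.V) :=
  {e | ∃ p : T.G.Walk u v, p.IsPath ∧ e ∈ p.edges}

/-- The edge set of the minimal subtree containing the leaves in `S`. -/
def subtreeEdges (T : WTree n) (S : Set (Fin n)) : Set (Sym2 T.V) :=
  {e | ∃ i ∈ S, ∃ j ∈ S, e ∈ T.pathEdges (T.leaf i) (T.leaf j)}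

/-- `D_I(T)`: the weight of the minimal subtree of `T` containing the leaves in `I`. -/
noncomputable def D (T : WTree n) (I : Finset (Fin n)) : ℝ :=
  ∑ᶠ e ∈ T.subtreeEdges ↑I, T.w e

/-- The total weight of the tree. -/
noncomputable def Dtot (T : WTree n) : ℝ := ∑ᶠ e ∈ T.G.edgeSet, T.w e

/-- An edge is a twig edge if it lies on the path from some leaf to the nearest node. -/
def IsTwigEdge (T : WTree n) (e : Sym2 T.V) : Prop :=
  ∃ (i : Fin n) (v : T.V), T.IsNode v ∧
    ∃ p : T.G.Walk (T.leaf i) v, p.IsPath ∧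
      (∀ u ∈ p.support, T.IsNode u → u = v) ∧ e ∈ p.edges

/-- Internal-nonzero-weighted: every internal (non-twig) edge has nonzero weight. -/
def InternalNonzero (T : WTree n) : Prop :=
  ∀ e ∈ T.G.edgeSet, ¬ T.IsTwigEdge e → T.w e ≠ 0

/-- Positive-weighted: all edge weights are positive. -/
def PositiveWeighted (T : WTree n) : Prop := ∀ e ∈ T.G.edgeSet, 0 < T.w e

/-- The leaves lying on the side of vertex `a` after removing the edge `e`. -/
def sideLeaves (T : WTree n) (e : Sym2 T.V) (a : T.V) : Set (Fin n) :=
  {i | e ∉ T.pathEdges (T.leaf i) a}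

/-- A pseudostar of kind `(n, k)`: every edge divides the leaf set into two parts,
at least one of which has cardinality `≥ k`. -/
def IsPseudostar (T : WTree n) (k : ℕ) : Prop :=
  ∀ a b : T.V, T.G.Adj a b →
    k ≤ (T.sideLeaves s(a, b) a).ncard ∨ k ≤ (T.sideLeaves s(a, b) b).ncard

/-- `T` realizes the family `D₀` of `k`-weights. -/
def Realizes (T : WTree n) (k : ℕ) (D₀ : Finset (Fin n) → ℝ) : Prop :=
  ∀ I : Finset (Fin n), I.card = k → T.D I = D₀ I

/-- Two leaves are neighbours if the path between them contains exactly one node. -/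
def Neighbours (T : WTree n) (i j : Fin n) : Prop :=
  i ≠ j ∧ ∃ p : T.G.Walk (T.leaf i) (T.leaf j), p.IsPath ∧
    ∃! v : T.V, v ∈ p.support ∧ T.IsNode v

/-- The Buneman index `⟨i,j | l,m⟩` holds iff the paths `i–j` and `l–m` are disjoint,
equivalently in `T|_{i,j,l,m}` the leaves `i,j` are neighbours, `l,m` are neighbours
and `i,l` are not neighbours. -/
def Buneman (T : WTree n) (i j l m : Fin n) : Prop :=
  ∀ (p : T.G.Walk (T.leaf i) (T.leaf j)) (q : T.G.Walk (T.leaf l) (T.leaf m)),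
    p.IsPath → q.IsPath → ∀ v : T.V, v ∈ p.support → v ∉ q.support

/-- The minimal subtree spanned by the four leaves `i,j,l,m` is a star (i.e. all
pairwise paths share a common vertex). -/
def StarQuartet (T : WTree n) (i j l m : Fin n) : Prop :=
  ∃ c : T.V, ∀ x ∈ ({i, j, l, m} : Set (Fin n)), ∀ y ∈ ({i, j, l, m} : Set (Fin n)),
    x ≠ y → ∀ p : T.G.Walk (T.leaf x) (T.leaf y), p.IsPath → c ∈ p.support

/-- A cherry: a set of leaves pairwise neighbours. -/
def IsCherry (T : WTree n) (C : Set (Fin n)) : Prop :=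
  ∀ i ∈ C, ∀ j ∈ C, i ≠ j → T.Neighbours i j

/-- A complete cherry: a cherry not strictly contained in another cherry. -/
def IsCompleteCherry (T : WTree n) (C : Set (Fin n)) : Prop :=
  T.IsCherry C ∧ ¬ ∃ C' : Set (Fin n), T.IsCherry C' ∧ C ⊂ C'

/-- A star is a tree with only one node. -/
def IsStar (T : WTree n) : Prop := ∃! v : T.V, T.IsNode v

/-- `x` is the median of the three leaves `a,b,c`: it lies on all three pairwise paths. -/
def IsMedian (T : WTree n) (a b c : Fin n) (x : T.V) : Prop :=
  (∀ p : T.G.Walk (T.leaf a) (T.leaf b), p.IsPath → x ∈ p.support) ∧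
  (∀ p : T.G.Walk (T.leaf a) (T.leaf c), p.IsPath → x ∈ p.support) ∧
  (∀ p : T.G.Walk (T.leaf b) (T.leaf c), p.IsPath → x ∈ p.support)

/-- The weight of the twig associated to the leaf `i` (the path from the leaf to the
nearest node). -/
noncomputable def twigWeight (T : WTree n) (i : Fin n) : ℝ :=
  ∑ᶠ e ∈ {e : Sym2 T.V | ∃ v : T.V, T.IsNode v ∧
      ∃ p : T.G.Walk (T.leaf i) v, p.IsPath ∧
        (∀ u ∈ p.support, T.IsNode u → u = v) ∧ e ∈ p.edges}, T.w e

/-- Two weighted trees with leaf set `Fin n` are equal (isomorphic respecting the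
leaf labels and the weights). -/
def Isom (T T' : WTree n) : Prop :=
  ∃ φ : T.V ≃ T'.V,
    (∀ a b : T.V, T.G.Adj a b ↔ T'.G.Adj (φ a) (φ b)) ∧
    (∀ i : Fin n, φ (T.leaf i) = T'.leaf i) ∧
    (∀ a b : T.V, T.w s(a, b) = T'.w s(φ a, φ b))

/-- `T'` is obtained from `T` by the `k`-IO operation on the edge `{a, b}`:
the edge divides the leaf set into two parts each of cardinality `< k`; it is
contracted (via the quotient map `φ`) and `w{a,b}/k` is added to the weight of
every twig (i.e. to every pendant edge). -/
def IOStepOn (k : ℕ) (T T' : WTree n) (a b : T.V) : Prop :=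
  T.G.Adj a b ∧
  (T.sideLeaves s(a, b) a).ncard < k ∧ (T.sideLeaves s(a, b) b).ncard < k ∧
  ∃ φ : T.V → T'.V,
    Function.Surjective φ ∧ φ a = φ b ∧
    (∀ x y : T.V, φ x = φ y → x = y ∨ s(x, y) = s(a, b)) ∧
    (∀ i : Fin n, φ (T.leaf i) = T'.leaf i) ∧
    (∀ u v : T'.V, T'.G.Adj u v ↔
      ∃ x y : T.V, φ x = u ∧ φ y = v ∧ T.G.Adj x y ∧ s(x, y) ≠ s(a, b)) ∧
    (∀ x y : T.V, T.G.Adj x y → s(x, y) ≠ s(a, b) →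
      ((∃ i : Fin n, T.leaf i = x ∨ T.leaf i = y) →
        T'.w s(φ x, φ y) = T.w s(x, y) + T.w s(a, b) / k) ∧
      (¬ (∃ i : Fin n, T.leaf i = x ∨ T.leaf i = y) →
        T'.w s(φ x, φ y) = T.w s(x, y)))

/-- `T'` is obtained from `T` by a `k`-IO operation. -/
def IOStep (k : ℕ) (T T' : WTree n) : Prop := ∃ a b : T.V, IOStepOn k T T' a b

/-- `T'` is obtained from `T` by a `k`-OI operation (the inverse of a `k`-IO operation). -/
def OIStep (k : ℕ) (T T' : WTree n) : Prop := IOStep k T' T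

/-- `T'` is obtained from `T` by inserting an internal edge of weight `0`
(the inverse of contracting it). -/
def InsertZeroStep (T T' : WTree n) : Prop :=
  ∃ a b : T'.V, T'.G.Adj a b ∧ ¬ T'.IsTwigEdge s(a, b) ∧ T'.w s(a, b) = 0 ∧
    ∃ φ : T'.V → T.V,
      Function.Surjective φ ∧ φ a = φ b ∧
      (∀ x y : T'.V, φ x = φ y → x = y ∨ s(x, y) = s(a, b)) ∧
      (∀ i : Fin n, φ (T'.leaf i) = T.leaf i) ∧
      (∀ u v : T.V, T.G.Adj u v ↔
        ∃ x y : T'.V, φ x = u ∧ φ y = v ∧ T'.G.Adj x y ∧ s(x, y) ≠ s(a, b)) ∧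
      (∀ x y : T'.V, T'.G.Adj x y → s(x, y) ≠ s(a, b) → T.w s(φ x, φ y) = T'.w s(x, y))

/-- Replace the weight function of `T`. -/
def reweight (T : WTree n) (w' : Sym2 T.V → ℝ)
    (h : ∀ e, e ∉ T.G.edgeSet → w' e = 0) : WTree n :=
  { T with w := w', wSupport := h }

end WTree

section Helpers

namespace WTree

open SimpleGraph

variable {n : ℕ}

lemma path_unique (T : WTree n) {u v : T.V} {p q : T.G.Walk u v}
    (hp : p.IsPath) (hq : q.IsPath) : p = q :=
  (T.isTree.existsUnique_path u v).unique hp hq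

lemma exists_path (T : WTree n) (u v : T.V) : ∃ p : T.G.Walk u v, p.IsPath := by
  classical
  obtain ⟨w⟩ := T.isTree.isConnected.preconnected u v
  exact ⟨w.toPath.1, w.toPath.2⟩

lemma reachable_del_imp (T : WTree n) {a b u v : T.V}
    (h : (T.G.deleteEdges {s(a, b)}).Reachable u v) : s(a, b) ∉ T.pathEdges u v := by
  classical
  obtain ⟨q0⟩ := h
  obtain ⟨q, hq⟩ : ∃ p : (T.G.deleteEdges {s(a, b)}).Walk u v, p.IsPath :=
    ⟨q0.toPath.1, q0.toPath.2⟩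
  have hsub : ∀ e ∈ q.edges, e ∈ T.G.edgeSet ∧ e ≠ s(a, b) := by
    intro e he
    have h2 := q.edges_subset_edgeSet he
    rw [edgeSet_deleteEdges] at h2
    exact ⟨h2.1, by simpa using h2.2⟩
  have hp : (q.transfer T.G (fun e he => (hsub e he).1)).IsPath := hq.transfer _
  have hpe : (q.transfer T.G (fun e he => (hsub e he).1)).edges = q.edges :=
    q.edges_transfer _
  rintro ⟨r, hr, her⟩
  rw [T.path_unique hr hp, hpe] at her
  exact (hsub _ her).2 rfl

lemma reachable_del_of_not_edge (T : WTree n) {a b u v : T.V}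
    {p : T.G.Walk u v} (he : s(a, b) ∉ p.edges) :
    (T.G.deleteEdges {s(a, b)}).Reachable u v := by
  refine ⟨p.transfer _ fun e hep => ?_⟩
  rw [edgeSet_deleteEdges]
  exact ⟨p.edges_subset_edgeSet hep,
    fun h => he (by rwa [Set.mem_singleton_iff.1 h] at hep)⟩

lemma reach_a_or_b (T : WTree n) {a b : T.V} (hab : T.G.Adj a b) (v : T.V) :
    (T.G.deleteEdges {s(a, b)}).Reachable v a ∨
      (T.G.deleteEdges {s(a, b)}).Reachable v b := by
  classical
  obtain ⟨p, hp⟩ := T.exists_path v a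
  by_cases he : s(a, b) ∈ p.edges
  · right
    have hbmem : b ∈ p.support := p.snd_mem_support_of_mem_edges he
    have hd : (p.dropUntil b hbmem).IsPath := hp.dropUntil _
    have hdrop : p.dropUntil b hbmem = (Path.singleton hab.symm).1 :=
      T.path_unique hd (Path.singleton hab.symm).2
    have hnodup : ((p.takeUntil b hbmem).append (p.dropUntil b hbmem)).edges.Nodup := by
      rw [p.take_spec hbmem]; exact hp.edges_nodup
    rw [Walk.edges_append] at hnodup
    have hdisj := List.disjoint_of_nodup_append hnodup
    have hmem : s(a, b) ∈ (p.dropUntil b hbmem).edges := by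
      rw [hdrop]
      simpa [Sym2.eq_swap] using Path.mk'_mem_edges_singleton hab.symm
    exact T.reachable_del_of_not_edge (fun h => hdisj h hmem)
  · left; exact T.reachable_del_of_not_edge he

lemma cross_mem_pathEdges (T : WTree n) {a b u v : T.V}
    (hu : ¬ (T.G.deleteEdges {s(a, b)}).Reachable u a)
    (hv : (T.G.deleteEdges {s(a, b)}).Reachable v a) : s(a, b) ∈ T.pathEdges u v := by
  obtain ⟨p, hp⟩ := T.exists_path u v
  by_cases he : s(a, b) ∈ p.edges
  · exact ⟨p, hp, he⟩
  · exact absurd ((T.reachable_del_of_not_edge he).trans hv) hu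

lemma mem_sideLeaves_iff (T : WTree n) {a b : T.V} (c : T.V) (i : Fin n) :
    i ∈ T.sideLeaves s(a, b) c ↔ (T.G.deleteEdges {s(a, b)}).Reachable (T.leaf i) c := by
  constructor
  · intro h
    obtain ⟨p, hp⟩ := T.exists_path (T.leaf i) c
    by_cases he : s(a, b) ∈ p.edges
    · exact absurd ⟨p, hp, he⟩ h
    · exact T.reachable_del_of_not_edge he
  · exact fun h => T.reachable_del_imp h

lemma edge_mem_subtree (T : WTree n) {a b : T.V} (hab : T.G.Adj a b) {k : ℕ}
    (ha : (T.sideLeaves s(a, b) a).ncard < k) (hb : (T.sideLeaves s(a, b) b).ncard < k)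
    {I : Finset (Fin n)} (hI : I.card = k) : s(a, b) ∈ T.subtreeEdges ↑I := by
  have hex : ∀ c : T.V, (T.sideLeaves s(a, b) c).ncard < k →
      ∃ i ∈ I, i ∉ T.sideLeaves s(a, b) c := by
    intro c hc
    by_contra hcon
    push_neg at hcon
    have hsub : (↑I : Set (Fin n)) ⊆ T.sideLeaves s(a, b) c := fun i hi => hcon i hi
    have hle := Set.ncard_le_ncard hsub (Set.toFinite _)
    rw [Set.ncard_coe_finset, hI] at hle
    omega
  obtain ⟨i, hiI, hia⟩ := hex a ha
  obtain ⟨j, hjI, hjb⟩ := hex b hb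
  rw [T.mem_sideLeaves_iff] at hia hjb
  have hj : (T.G.deleteEdges {s(a, b)}).Reachable (T.leaf j) a :=
    (T.reach_a_or_b hab (T.leaf j)).resolve_right hjb
  exact ⟨i, hiI, j, hjI, T.cross_mem_pathEdges hia hj⟩

lemma exists_unique_nbr (T : WTree n) (i : Fin n) : ∃! c, T.G.Adj (T.leaf i) c := by
  have h1 : (T.G.neighborSet (T.leaf i)).ncard = 1 := (T.leafSpec _).2 ⟨i, rfl⟩
  obtain ⟨c, hc⟩ := Set.ncard_eq_one.1 h1
  refine ⟨c, ?_, ?_⟩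
  · have : c ∈ T.G.neighborSet (T.leaf i) := hc ▸ rfl
    exact this
  · intro y hy
    have hy' : y ∈ T.G.neighborSet (T.leaf i) := hy
    rw [hc] at hy'
    exact hy'

noncomputable def nbr (T : WTree n) (i : Fin n) : T.V := (T.exists_unique_nbr i).choose

lemma nbr_adj (T : WTree n) (i : Fin n) : T.G.Adj (T.leaf i) (T.nbr i) :=
  (T.exists_unique_nbr i).choose_spec.1

lemma eq_nbr (T : WTree n) {i : Fin n} {c : T.V} (h : T.G.Adj (T.leaf i) c) : c = T.nbr i :=
  (T.exists_unique_nbr i).choose_spec.2 c h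

/-- The pendant edge of leaf `i`. -/
noncomputable def pendant (T : WTree n) (i : Fin n) : Sym2 T.V := s(T.leaf i, T.nbr i)

lemma pendant_mem_edgeSet (T : WTree n) (i : Fin n) : T.pendant i ∈ T.G.edgeSet :=
  T.nbr_adj i

lemma pendant_mem_edges (T : WTree n) {i : Fin n} {v : T.V} (p : T.G.Walk (T.leaf i) v)
    (hne : T.leaf i ≠ v) : T.pendant i ∈ p.edges := by
  obtain ⟨x, h, q, rfl⟩ := Walk.not_nil_iff.1 (Walk.not_nil_of_ne (p := p) hne)
  obtain rfl := T.eq_nbr h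
  simp [pendant, Walk.edges_cons]

lemma pendant_mem_subtree (T : WTree n) {I : Finset (Fin n)} (hcard : 2 ≤ I.card)
    {i : Fin n} (hi : i ∈ I) : T.pendant i ∈ T.subtreeEdges ↑I := by
  obtain ⟨j, hj, hne⟩ := Finset.exists_mem_ne (s := I) (by omega) i
  obtain ⟨p, hp⟩ := T.exists_path (T.leaf i) (T.leaf j)
  exact ⟨i, hi, j, hj, p, hp, T.pendant_mem_edges p (fun h => hne (T.leafInj h).symm)⟩

lemma mem_of_pendant_mem_subtree (T : WTree n) {I : Finset (Fin n)} {i : Fin n}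
    (h : T.pendant i ∈ T.subtreeEdges ↑I) : i ∈ I := by
  classical
  obtain ⟨j, hj, l, hl, p, hp, he⟩ := h
  by_cases hij : T.leaf i = T.leaf j
  · rwa [← T.leafInj hij] at hj
  by_cases hil : T.leaf i = T.leaf l
  · rwa [← T.leafInj hil] at hl
  exfalso
  have he' : s(T.leaf i, T.nbr i) ∈ p.edges := he
  have hsupp : T.leaf i ∈ p.support := p.fst_mem_support_of_mem_edges he'
  have h1 : T.pendant i ∈ (p.dropUntil _ hsupp).edges := T.pendant_mem_edges _ hil
  have h2 : T.pendant i ∈ (p.takeUntil _ hsupp).edges := by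
    have h3 := T.pendant_mem_edges ((p.takeUntil _ hsupp).reverse) hij
    rwa [Walk.edges_reverse, List.mem_reverse] at h3
  have hnodup : ((p.takeUntil _ hsupp).append (p.dropUntil _ hsupp)).edges.Nodup := by
    rw [p.take_spec hsupp]; exact hp.edges_nodup
  rw [Walk.edges_append] at hnodup
  exact List.disjoint_of_nodup_append hnodup h2 h1

lemma walk_closed (T : WTree n) {S : Set T.V} (hS : ∀ x ∈ S, ∀ y, T.G.Adj x y → y ∈ S) :
    ∀ {u v : T.V}, T.G.Walk u v → u ∈ S → v ∈ S := by
  intro u v p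
  induction p with
  | nil => exact id
  | cons h q ih => exact fun hu => ih (hS _ hu _ h)

lemma pendant_injective (T : WTree n) (hn : 3 ≤ n) : Function.Injective T.pendant := by
  intro i j h
  by_contra hne
  rw [pendant, pendant, Sym2.eq_iff] at h
  rcases h with ⟨h1, h2⟩ | ⟨h1, h2⟩
  · exact hne (T.leafInj h1)
  obtain ⟨l, hl1, hl2⟩ : ∃ l : Fin n, l ≠ i ∧ l ≠ j := by
    by_contra hc
    push_neg at hc
    have hsub : (Finset.univ : Finset (Fin n)) ⊆ {i, j} := by
      intro x _
      by_cases hxi : x = i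
      · simp [hxi]
      · simp [hc x hxi]
    have hcard := Finset.card_le_card hsub
    have h2' : ({i, j} : Finset (Fin n)).card ≤ 2 := by
      apply le_trans (Finset.card_insert_le _ _)
      simp
    simp only [Finset.card_univ, Fintype.card_fin] at hcard
    omega
  have hclosed : ∀ x ∈ ({T.leaf i, T.leaf j} : Set T.V), ∀ y, T.G.Adj x y →
      y ∈ ({T.leaf i, T.leaf j} : Set T.V) := by
    intro x hx y hy
    simp only [Set.mem_insert_iff, Set.mem_singleton_iff] at hx ⊢
    rcases hx with rfl | rfl
    · right; exact (T.eq_nbr hy).trans h2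
    · left; exact (T.eq_nbr hy).trans h1.symm
  have hmem : T.leaf l ∈ ({T.leaf i, T.leaf j} : Set T.V) := by
    obtain ⟨p, _⟩ := T.exists_path (T.leaf i) (T.leaf l)
    exact T.walk_closed hclosed p (Set.mem_insert _ _)
  simp only [Set.mem_insert_iff, Set.mem_singleton_iff] at hmem
  rcases hmem with h | h
  · exact hl1 (T.leafInj h)
  · exact hl2 (T.leafInj h)

lemma walk_from_isolated (T : WTree n) {a b : T.V} (hunique : ∀ x, T.G.Adj a x → x = b) :
    ∀ {v : T.V}, (T.G.deleteEdges {s(a, b)}).Walk a v → a = v := by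
  intro v q
  cases q with
  | nil => rfl
  | cons hadj q' =>
    rw [SimpleGraph.deleteEdges_adj] at hadj
    exact absurd (by rw [hunique _ hadj.1]; exact rfl) hadj.2

lemma pendant_ne_edge_aux (T : WTree n) {k : ℕ} {a b : T.V} (hab : T.G.Adj a b)
    (hb : (T.sideLeaves s(a, b) b).ncard < k) (hkn : k ≤ n - 1)
    {i : Fin n} (hia : T.leaf i = a) (hnb : T.nbr i = b) : False := by
  have hunique : ∀ x, T.G.Adj a x → x = b := by
    intro x hx
    rw [← hia] at hx
    exact (T.eq_nbr hx).trans hnb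
  have hsub : {j : Fin n | j ≠ i} ⊆ T.sideLeaves s(a, b) b := by
    intro j hj
    rw [T.mem_sideLeaves_iff]
    rcases T.reach_a_or_b hab (T.leaf j) with h | h
    · exfalso
      have hja : T.leaf j = a := by
        obtain ⟨q⟩ := h.symm
        exact (T.walk_from_isolated hunique q).symm
      exact hj (T.leafInj (hja.trans hia.symm))
    · exact h
  have hcard : n - 1 ≤ (T.sideLeaves s(a, b) b).ncard := by
    have h1 : ({j : Fin n | j ≠ i}).ncard = n - 1 := by
      have heq : {j : Fin n | j ≠ i} = Set.univ \ {i} := by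
        ext x; simp
      rw [heq, Set.ncard_diff (Set.subset_univ _), Set.ncard_univ, Set.ncard_singleton]
      simp [Nat.card_eq_fintype_card]
    calc n - 1 = ({j : Fin n | j ≠ i}).ncard := h1.symm
      _ ≤ _ := Set.ncard_le_ncard hsub (Set.toFinite _)
  omega

lemma pendant_ne_edge (T : WTree n) {k : ℕ} {a b : T.V} (hab : T.G.Adj a b)
    (ha : (T.sideLeaves s(a, b) a).ncard < k) (hb : (T.sideLeaves s(a, b) b).ncard < k)
    (hkn : k ≤ n - 1) (i : Fin n) : T.pendant i ≠ s(a, b) := by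
  intro h
  rw [pendant, Sym2.eq_iff] at h
  rcases h with ⟨h1, h2⟩ | ⟨h1, h2⟩
  · exact T.pendant_ne_edge_aux hab hb hkn h1 h2
  · have ha' : (T.sideLeaves s(b, a) a).ncard < k := by
      have hswap : s(b, a) = s(a, b) := Sym2.eq_swap
      rwa [hswap]
    exact T.pendant_ne_edge_aux hab.symm ha' hkn h1 h2

lemma sum_ite_range_pendant (T : WTree n) (hn : 3 ≤ n) [DecidableEq (Sym2 T.V)]
    [DecidablePred (· ∈ Set.range T.pendant)]
    (s : Finset (Sym2 T.V)) (c : ℝ) :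
    (∑ e ∈ s, if e ∈ Set.range T.pendant then c else 0)
      = ∑ i : Fin n, if T.pendant i ∈ s then c else 0 := by
  have hP := T.pendant_injective hn
  have key : ∀ e, (if e ∈ Set.range T.pendant then c else 0)
      = ∑ i : Fin n, if T.pendant i = e then c else 0 := by
    intro e
    by_cases h : e ∈ Set.range T.pendant
    · obtain ⟨i0, rfl⟩ := h
      rw [if_pos ⟨i0, rfl⟩, Finset.sum_eq_single i0]
      · rw [if_pos rfl]
      · intro b _ hb; rw [if_neg (fun h => hb (hP h))]
      · intro h; exact absurd (Finset.mem_univ i0) h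
    · rw [if_neg h, eq_comm]
      apply Finset.sum_eq_zero
      intro i _
      exact if_neg fun hi => h ⟨i, hi⟩
  rw [Finset.sum_congr rfl fun e _ => key e, Finset.sum_comm]
  refine Finset.sum_congr rfl fun i _ => ?_
  rw [Finset.sum_ite_eq s (T.pendant i) (fun _ => c)]

end WTree

end Helpers

/-- let `3 ≤ k ≤ n-1` and let `T` be a weighted tree with leaf set `[n]`
having an edge `{a,b}` dividing `[n]` into two sets each of cardinality `< k`. Then for
every `z ∈ ℝ` there is a weight function `w'` on `T` giving the same `k`-weights and with
total weight `D_tot(T) − ((n−k)/k)·z`. -/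
theorem statement18 (n k : ℕ) (h3 : 3 ≤ k) (hk : k ≤ n - 1)
    (T : WTree n) (a b : T.V) (hab : T.G.Adj a b)
    (ha : (T.sideLeaves s(a, b) a).ncard < k)
    (hb : (T.sideLeaves s(a, b) b).ncard < k)
    (z : ℝ) :
    ∃ (w' : Sym2 T.V → ℝ) (hw' : ∀ e, e ∉ T.G.edgeSet → w' e = 0),
      (∀ I : Finset (Fin n), I.card = k → (T.reweight w' hw').D I = T.D I) ∧
      (T.reweight w' hw').Dtot = T.Dtot - (((n : ℝ) - (k : ℝ)) / (k : ℝ)) * z := by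
  classical
  haveI := T.fintypeV
  have hn : 3 ≤ n := by omega
  have hk0 : (k : ℝ) ≠ 0 := Nat.cast_ne_zero.2 (by omega)
  set c : ℝ := z / k with hc
  set w' : Sym2 T.V → ℝ := fun e =>
    T.w e + ((if e = s(a, b) then z else 0) -
      (if e ∈ Set.range T.pendant then c else 0)) with hw'def
  have hEab : s(a, b) ∈ T.G.edgeSet := hab
  have hw' : ∀ e, e ∉ T.G.edgeSet → w' e = 0 := by
    intro e he
    have h1 : e ≠ s(a, b) := fun h => he (h ▸ hEab)
    have h2 : e ∉ Set.range T.pendant := by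
      rintro ⟨i, rfl⟩; exact he (T.pendant_mem_edgeSet i)
    simp only [hw'def]
    rw [T.wSupport e he, if_neg h1, if_neg h2]
    ring
  have key : ∀ S : Set (Sym2 T.V), s(a, b) ∈ S →
      ∑ᶠ e ∈ S, w' e = (∑ᶠ e ∈ S, T.w e) + z
        - ({i : Fin n | T.pendant i ∈ S}.ncard : ℝ) * c := by
    intro S hSab
    have hS : S.Finite := Set.toFinite S
    rw [← hS.coe_toFinset, finsum_mem_coe_finset, finsum_mem_coe_finset]
    set s := hS.toFinset with hs
    have hsab : s(a, b) ∈ s := hS.mem_toFinset.2 hSab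
    have e0 : ∑ e ∈ s, w' e = ∑ e ∈ s, T.w e
        + ((∑ e ∈ s, if e = s(a, b) then z else 0)
          - (∑ e ∈ s, if e ∈ Set.range T.pendant then c else 0)) := by
      rw [← Finset.sum_sub_distrib, ← Finset.sum_add_distrib]
    have e1 : (∑ e ∈ s, if e = s(a, b) then z else 0) = z := by
      rw [Finset.sum_ite_eq' s (s(a, b)) (fun _ => z), if_pos hsab]
    have e2 : (∑ e ∈ s, if e ∈ Set.range T.pendant then c else 0)
        = ({i : Fin n | T.pendant i ∈ (s : Set (Sym2 T.V))}.ncard : ℝ) * c := by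
      rw [T.sum_ite_range_pendant hn s c, ← Finset.sum_filter]
      rw [Finset.sum_const]
      have heq : {i : Fin n | T.pendant i ∈ (s : Set (Sym2 T.V))}
          = ↑(Finset.univ.filter (fun i => T.pendant i ∈ s)) := by
        ext i; simp
      rw [heq, Set.ncard_coe_finset, nsmul_eq_mul]
    rw [e0, e1, e2]
    ring
  have hpend_sub : ∀ I : Finset (Fin n), I.card = k →
      {i : Fin n | T.pendant i ∈ T.subtreeEdges ↑I} = ↑I := by
    intro I hI
    ext i
    simp only [Set.mem_setOf_eq, Finset.coe_mem, Finset.mem_coe]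
    exact ⟨fun h => T.mem_of_pendant_mem_subtree h,
      fun h => T.pendant_mem_subtree (by omega) h⟩
  refine ⟨w', hw', ?_, ?_⟩
  · intro I hI
    have hDI : (T.reweight w' hw').D I = ∑ᶠ e ∈ T.subtreeEdges ↑I, w' e := rfl
    rw [hDI, key _ (T.edge_mem_subtree hab ha hb hI), hpend_sub I hI,
      Set.ncard_coe_finset, hI]
    show T.D I + z - (k : ℝ) * (z / k) = T.D I
    field_simp
    ring
  · have hDtot : (T.reweight w' hw').Dtot = ∑ᶠ e ∈ T.G.edgeSet, w' e := rfl
    have huniv : {i : Fin n | T.pendant i ∈ T.G.edgeSet} = Set.univ := by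
      ext i; simp [T.pendant_mem_edgeSet i]
    rw [hDtot, key _ hEab, huniv, Set.ncard_univ]
    show T.Dtot + z - (Nat.card (Fin n) : ℝ) * (z / k) = _
    rw [Nat.card_eq_fintype_card, Fintype.card_fin]
    field_simp
    ring
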